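/- Gumbel-max trick: let U_1,…,U_n be independent random variables on a probability space, each uniformly distributed on the interval (0,1), let w_1,…,w_n > 0 with Z = Σ_{i=1}^n w_i, and define the Gumbel-perturbed keys G_i = log w_i − log(−log U_i). Then for each index j, the probability that G_j is strictly larger than G_m for every m ≠ j equals w_j / Z. -/

import Mathlib

open MeasureTheory

private lemma gumbel_key_iff {a b u v : ℝ} (ha : 0 < a) (hb : 0 < b)
    (hu : u ∈ Set.Ioo (0:ℝ) 1) (hv : v ∈ Set.Ioo (0:ℝ) 1) :
    (Real.log a - Real.log (-Real.log u) < Real.log b - Real.log (-Real.log v)) ↔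
      u < v ^ (a / b) := by
  have hu1 : 0 < -Real.log u := neg_pos.2 (Real.log_neg hu.1 hu.2)
  have hv1 : 0 < -Real.log v := neg_pos.2 (Real.log_neg hv.1 hv.2)
  rw [Real.rpow_def_of_pos hv.1]
  constructor
  · intro h
    have h1 : Real.log (a * -Real.log v) < Real.log (b * -Real.log u) := by
      rw [Real.log_mul (ne_of_gt ha) (ne_of_gt hv1), Real.log_mul (ne_of_gt hb) (ne_of_gt hu1)]
      linarith
    have h2 : a * -Real.log v < b * -Real.log u :=
      (Real.log_lt_log_iff (by positivity) (by positivity)).1 h1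
    have h3 : Real.log u < Real.log v * (a / b) := by
      rw [mul_comm, div_mul_eq_mul_div, lt_div_iff₀ hb]
      nlinarith
    calc u = Real.exp (Real.log u) := (Real.exp_log hu.1).symm
    _ < _ := Real.exp_lt_exp.2 h3
  · intro h
    have h3 : Real.log u < Real.log v * (a / b) := by
      rw [← Real.exp_lt_exp, Real.exp_log hu.1]; exact h
    have h2 : a * -Real.log v < b * -Real.log u := by
      rw [mul_comm, div_mul_eq_mul_div, lt_div_iff₀ hb] at h3
      nlinarith
    have h1 : Real.log (a * -Real.log v) < Real.log (b * -Real.log u) :=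
      (Real.log_lt_log_iff (by positivity) (by positivity)).2 h2
    rw [Real.log_mul (ne_of_gt ha) (ne_of_gt hv1), Real.log_mul (ne_of_gt hb) (ne_of_gt hu1)] at h1
    linarith

/-- Gumbel-max trick: if `U₁,…,Uₙ` are i.i.d. uniform on `(0,1)` and `Gᵢ = log wᵢ − log(−log Uᵢ)`
with `wᵢ > 0`, then the probability that `Gⱼ` strictly exceeds all other `Gₘ` is `wⱼ / Z`. -/
theorem gumbel_max_trick {Ω : Type*} [MeasurableSpace Ω] (P : Measure Ω)
    [IsProbabilityMeasure P] {n : ℕ} (U : Fin n → Ω → ℝ) (hmeas : ∀ i, Measurable (U i))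
    (hindep : ProbabilityTheory.iIndepFun U P)
    (hunif : ∀ i, P.map (U i) = volume.restrict (Set.Ioo (0 : ℝ) 1))
    (w : Fin n → ℝ) (hw : ∀ i, 0 < w i) (j : Fin n) :
    P {ω | ∀ m, m ≠ j →
        Real.log (w m) - Real.log (-Real.log (U m ω)) <
          Real.log (w j) - Real.log (-Real.log (U j ω))} =
      ENNReal.ofReal (w j / ∑ i, w i) := by
  obtain ⟨m, rfl⟩ : ∃ m, n = m + 1 :=
    ⟨n - 1, (Nat.succ_pred_eq_of_pos j.pos).symm⟩
  set μ : Measure ℝ := volume.restrict (Set.Ioo 0 1) with hμdef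
  haveI hμprob : IsProbabilityMeasure μ := ⟨by simp [hμdef, Real.volume_Ioo]⟩
  set ν : Measure (Fin (m+1) → ℝ) := Measure.pi (fun _ => μ) with hνdef
  -- the joint law is the product measure
  have hF : Measurable (fun ω i => U i ω) := measurable_pi_lambda _ hmeas
  have hmap : P.map (fun ω i => U i ω) = ν := by
    refine (Measure.pi_eq fun s hs => ?_).symm
    rw [Measure.map_apply hF (MeasurableSet.univ_pi hs)]
    have hpre : (fun ω i => U i ω) ⁻¹' (Set.pi Set.univ s) = ⋂ i ∈ Finset.univ, U i ⁻¹' s i := by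
      ext ω; simp [Set.mem_pi]
    rw [hpre, hindep.measure_inter_preimage_eq_mul Finset.univ (fun i _ => hs i)]
    refine Finset.prod_congr rfl fun i _ => ?_
    rw [← Measure.map_apply (hmeas i) (hs i), hunif i]
  -- the event as a set in the product space
  set S : Set (Fin (m+1) → ℝ) := {x | ∀ k, k ≠ j →
      Real.log (w k) - Real.log (-Real.log (x k)) <
        Real.log (w j) - Real.log (-Real.log (x j))} with hSdef
  have hmeasLog : ∀ k : Fin (m+1), Measurable fun x : Fin (m+1) → ℝ =>
      Real.log (w k) - Real.log (-Real.log (x k)) :=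
    fun k => measurable_const.sub
      (Real.measurable_log.comp ((Real.measurable_log.comp (measurable_pi_apply k)).neg))
  have hSmeas : MeasurableSet S := by
    have : S = ⋂ k, {x : Fin (m+1) → ℝ | k ≠ j →
        Real.log (w k) - Real.log (-Real.log (x k)) <
          Real.log (w j) - Real.log (-Real.log (x j))} := by
      ext x; simp [hSdef, Set.mem_iInter]
    rw [this]
    refine MeasurableSet.iInter fun k => ?_
    by_cases hk : k = j
    · subst hk
      convert MeasurableSet.univ using 1
      ext x; simp
    · simp only [hk, ne_eq, not_false_eq_true, forall_true_left]
      exact measurableSet_lt (hmeasLog k) (hmeasLog j)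
  have hPev : P {ω | ∀ k, k ≠ j →
      Real.log (w k) - Real.log (-Real.log (U k ω)) <
        Real.log (w j) - Real.log (-Real.log (U j ω))} = ν S := by
    rw [← hmap, Measure.map_apply hF hSmeas]; rfl
  rw [hPev]
  -- replace `S` by a nicer set, a.e. w.r.t. `ν`
  set S₂ : Set (Fin (m+1) → ℝ) := {x | (∀ i, x i ∈ Set.Ioo (0:ℝ) 1) ∧
      ∀ k, k ≠ j → x k < x j ^ (w k / w j)} with hS₂def
  have hae : ∀ᵐ x ∂ν, ∀ i, x i ∈ Set.Ioo (0:ℝ) 1 := by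
    rw [ae_iff]
    have hset : {x : Fin (m+1) → ℝ | ¬ ∀ i, x i ∈ Set.Ioo (0:ℝ) 1} =
        (Set.pi Set.univ fun _ => Set.Ioo (0:ℝ) 1)ᶜ := by
      ext x; simp [Set.mem_pi]
    rw [hset, measure_compl (MeasurableSet.univ_pi fun _ => measurableSet_Ioo)
      (measure_ne_top _ _), hνdef, Measure.pi_pi]
    simp [hμdef, Real.volume_Ioo]
  have hνS : ν S = ν S₂ := by
    refine measure_congr (Filter.eventuallyEq_set.2 ?_)
    filter_upwards [hae] with x hx
    simp only [hSdef, hS₂def, Set.mem_setOf_eq]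
    constructor
    · intro h
      exact ⟨hx, fun k hk => (gumbel_key_iff (hw k) (hw j) (hx k) (hx j)).1 (h k hk)⟩
    · intro h k hk
      exact (gumbel_key_iff (hw k) (hw j) (hx k) (hx j)).2 (h.2 k hk)
  rw [hνS]
  -- split off coordinate j
  set c : Fin m → ℝ := fun k => w (j.succAbove k) / w j with hcdef
  have hc : ∀ k, 0 < c k := fun k => div_pos (hw _) (hw j)
  set T : Set (ℝ × (Fin m → ℝ)) := {p | p.1 ∈ Set.Ioo (0:ℝ) 1 ∧
      ∀ k, p.2 k ∈ Set.Ioo 0 (p.1 ^ c k)} with hTdef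
  have hTmeas : MeasurableSet T := by
    have hT2 : T = {p : ℝ × (Fin m → ℝ) | p.1 ∈ Set.Ioo (0:ℝ) 1} ∩
        ⋂ k, {p : ℝ × (Fin m → ℝ) | 0 < p.2 k ∧ p.2 k < p.1 ^ c k} := by
      ext p; simp [hTdef, Set.mem_iInter, Set.mem_Ioo, forall_and]
    rw [hT2]
    refine MeasurableSet.inter (measurable_fst measurableSet_Ioo) ?_
    refine MeasurableSet.iInter fun k => ?_
    refine MeasurableSet.inter ?_ ?_
    · exact measurableSet_lt measurable_const ((measurable_pi_apply k).comp measurable_snd)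
    · exact measurableSet_lt ((measurable_pi_apply k).comp measurable_snd)
        (((Real.continuous_rpow_const (le_of_lt (hc k))).measurable).comp measurable_fst)
  have hpre2 : S₂ = (MeasurableEquiv.piFinSuccAbove (fun _ => ℝ) j) ⁻¹' T := by
    ext x
    simp only [hS₂def, hTdef, Set.mem_preimage, Set.mem_setOf_eq,
      MeasurableEquiv.piFinSuccAbove_apply, Fin.insertNthEquiv_symm_apply, Fin.removeNth]
    constructor
    · rintro ⟨h1, h2⟩
      refine ⟨h1 j, fun k => ⟨(h1 _).1, h2 _ (j.succAbove_ne k)⟩⟩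
    · rintro ⟨h1, h2⟩
      have hxj1 : ∀ k : Fin m, x (j.succAbove k) ∈ Set.Ioo (0:ℝ) 1 := by
        intro k
        refine ⟨(h2 k).1, lt_trans (h2 k).2 ?_⟩
        exact Real.rpow_lt_one (le_of_lt h1.1) h1.2 (hc k)
      refine ⟨fun i => ?_, fun k hk => ?_⟩
      · by_cases hi : i = j
        · exact hi ▸ h1
        · obtain ⟨z, rfl⟩ := Fin.exists_succAbove_eq hi
          exact hxj1 z
      · obtain ⟨z, rfl⟩ := Fin.exists_succAbove_eq hk
        exact (h2 z).2
  have hmp := measurePreserving_piFinSuccAbove (fun _ : Fin (m+1) => μ) j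
  rw [hpre2, hmp.measure_preimage hTmeas.nullMeasurableSet]
  -- compute the product measure of T
  rw [Measure.prod_apply hTmeas]
  have hZpos : 0 < ∑ i, w i := Finset.sum_pos (fun i _ => hw i) ⟨j, Finset.mem_univ j⟩
  set a : ℝ := ∑ k, c k with hadef
  have ha : 0 ≤ a := Finset.sum_nonneg fun k _ => le_of_lt (hc k)
  have hsum : a + 1 = (∑ i, w i) / w j := by
    rw [hadef, hcdef]
    rw [Fin.sum_univ_succAbove w j, ← Finset.sum_div]
    have hj := (hw j).ne'
    field_simp
    ring
  have hinner : ∀ u ∈ Set.Ioo (0:ℝ) 1,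
      (Measure.pi fun _ : Fin m => μ) (Prod.mk u ⁻¹' T) = ENNReal.ofReal (u ^ a) := by
    intro u hu
    have hTu : Prod.mk u ⁻¹' T = Set.pi Set.univ fun k => Set.Ioo 0 (u ^ c k) := by
      ext y
      simp only [hTdef, Set.mem_preimage, Set.mem_setOf_eq, Set.mem_pi, Set.mem_univ,
        forall_true_left, hu, true_and]
    rw [hTu, Measure.pi_pi]
    have hμIoo : ∀ k : Fin m, μ (Set.Ioo 0 (u ^ c k)) = ENNReal.ofReal (u ^ c k) := by
      intro k
      have h1 : u ^ c k < 1 := Real.rpow_lt_one (le_of_lt hu.1) hu.2 (hc k)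
      rw [hμdef, Measure.restrict_apply measurableSet_Ioo, Set.Ioo_inter_Ioo]
      rw [Real.volume_Ioo]
      congr 1
      rw [max_self, min_eq_left (le_of_lt h1), sub_zero]
    calc ∏ k, μ (Set.Ioo 0 (u ^ c k)) = ∏ k, ENNReal.ofReal (u ^ c k) := by
          exact Finset.prod_congr rfl fun k _ => hμIoo k
    _ = ENNReal.ofReal (∏ k, u ^ c k) :=
          (ENNReal.ofReal_prod_of_nonneg fun k _ => Real.rpow_nonneg (le_of_lt hu.1) _).symm
    _ = ENNReal.ofReal (u ^ a) := by
          rw [hadef, Real.rpow_sum_of_pos hu.1]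
  have hlint : ∫⁻ u, (Measure.pi fun _ : Fin m => μ) (Prod.mk u ⁻¹' T) ∂μ =
      ∫⁻ u in Set.Ioo (0:ℝ) 1, ENNReal.ofReal (u ^ a) := by
    rw [hμdef]
    exact setLIntegral_congr_fun measurableSet_Ioo hinner
  rw [hlint]
  -- final integral computation
  have hint : IntegrableOn (fun u : ℝ => u ^ a) (Set.Ioo 0 1) := by
    have := (intervalIntegral.intervalIntegrable_rpow' (a := 0) (b := 1) (r := a)
      (by linarith)).1
    exact this.mono_set Set.Ioo_subset_Ioc_self
  have hnn : 0 ≤ᶠ[ae (volume.restrict (Set.Ioo (0:ℝ) 1))] fun u : ℝ => u ^ a := by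
    refine (ae_restrict_iff' measurableSet_Ioo).2 (Filter.Eventually.of_forall fun u hu => ?_)
    exact Real.rpow_nonneg (le_of_lt hu.1) _
  rw [← ofReal_integral_eq_lintegral_ofReal hint hnn]
  congr 1
  have hIoo : ∫ u in Set.Ioo (0:ℝ) 1, u ^ a = ∫ u in (0:ℝ)..1, u ^ a := by
    rw [intervalIntegral.integral_of_le (by norm_num), ← integral_Ioc_eq_integral_Ioo]
  rw [hIoo, integral_rpow (Or.inl (by linarith))]
  rw [Real.one_rpow, Real.zero_rpow (by linarith), sub_zero, hsum]
  rw [one_div_div]
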